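/- Let partial preferences in the hybrid-query model be given and let M be a necessarily Pareto optimal matching. Then there exists a permutation σ of the agents such that for every i ∈ {1,…,n}: if M(σ(i)) ∈ rev(σ(i)) then |rev(σ(i))| ≥ min( rank'(σ(i), M(σ(i))), n − i ), and if M(σ(i)) ∉ rev(σ(i)) then |rev(σ(i))| ≥ n − i. -/

import Mathlib

/-!
Agents and houses are `Fin n`.  Hybrid-query partial preferences: revealed houses
`rev a` with injective rank values `rnk a h` (0-based, so the 1-based rank of `h`
for `a` is `(rnk a h : ℕ) + 1`).  A completion is a complete strict profile, given by
rank equivalences `P a : Fin n ≃ Fin n` (lower rank = more preferred), agreeing with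
`rnk` on all revealed houses.  A matching is a bijection `M : Equiv.Perm (Fin n)`.
Positions of a permutation `σ` are 0-based: `σ i` for `i : Fin n` is the agent in
(1-based) position `i + 1`, so the quantity `n - i₁` of the paper is `n - 1 - i`.
-/

def Dominates {n : ℕ} (P : Fin n → (Fin n ≃ Fin n)) (M' M : Equiv.Perm (Fin n)) : Prop :=
  (∀ a, P a (M' a) ≤ P a (M a)) ∧ ∃ a, P a (M' a) < P a (M a)

def ParetoOptimal {n : ℕ} (P : Fin n → (Fin n ≃ Fin n)) (M : Equiv.Perm (Fin n)) : Prop :=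
  ¬ ∃ M' : Equiv.Perm (Fin n), Dominates P M' M

/-- `P` is a completion of the hybrid-query partial preferences `(rev, rnk)`. -/
def HQCompletion {n : ℕ} (rev : Fin n → Finset (Fin n)) (rnk : Fin n → Fin n → Fin n)
    (P : Fin n → (Fin n ≃ Fin n)) : Prop :=
  ∀ a, ∀ h ∈ rev a, P a h = rnk a h

lemma exists_perm_extend {n : ℕ} (s : Finset (Fin n)) (f : Fin n → Fin n)
    (hf : Set.InjOn f s) : ∃ e : Equiv.Perm (Fin n), ∀ x ∈ s, e x = f x := by
  classical
  have hcard : (sᶜ : Finset (Fin n)).card = ((s.image f)ᶜ : Finset (Fin n)).card := by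
    simp [Finset.card_compl, Finset.card_image_of_injOn hf]
  set φ := Finset.equivOfCardEq hcard with hφ
  set g : Fin n → Fin n :=
    fun x => if hx : x ∈ s then f x else (φ ⟨x, Finset.mem_compl.2 hx⟩ : Fin n) with hg
  have hginj : Function.Injective g := by
    intro x y hxy
    by_cases hx : x ∈ s <;> by_cases hy : y ∈ s <;> simp only [hg, hx, hy, dif_pos, dif_neg,
      not_false_iff] at hxy
    · exact hf hx hy hxy
    · exact absurd (hxy ▸ Finset.mem_image_of_mem f hx)
        (Finset.mem_compl.1 (φ ⟨y, Finset.mem_compl.2 hy⟩).2)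
    · exact absurd (hxy ▸ Finset.mem_image_of_mem f hy)
        (Finset.mem_compl.1 (φ ⟨x, Finset.mem_compl.2 hx⟩).2)
    · have := φ.injective (Subtype.ext hxy)
      exact Subtype.ext_iff.1 this
  refine ⟨Equiv.ofBijective g (Finite.injective_iff_bijective.mp hginj), fun x hx => ?_⟩
  simp [Equiv.ofBijective, hg, hx]


def HQEdge {n : ℕ} (rev : Fin n → Finset (Fin n)) (rnk : Fin n → Fin n → Fin n)
    (M : Equiv.Perm (Fin n)) (a b : Fin n) : Prop :=
  ∃ e : Fin n ≃ Fin n, (∀ h ∈ rev a, e h = rnk a h) ∧ e (M b) < e (M a)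

lemma edge_of_unrevealed {n : ℕ} (rev : Fin n → Finset (Fin n)) (rnk : Fin n → Fin n → Fin n)
    (hinj : ∀ a, Set.InjOn (rnk a) (rev a)) (M : Equiv.Perm (Fin n)) (a : Fin n)
    (hMa : M a ∈ rev a → (rev a).card < (rnk a (M a) : ℕ) + 1)
    (b : Fin n) (hb1 : M b ∉ rev a) (hb2 : M b ≠ M a) :
    HQEdge rev rnk M a b := by
  classical
  by_cases hrev : M a ∈ rev a
  · -- find a free rank slot strictly below rnk a (M a)
    set r := rnk a (M a) with hr
    have hcards : (rev a).card ≤ (r : ℕ) := by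
      have := hMa hrev; omega
    have himg : ((rev a).image (rnk a) \ {r}).card = (rev a).card - 1 := by
      rw [Finset.card_sdiff_of_subset (by simp [hr, Finset.mem_image_of_mem _ hrev])]
      simp [Finset.card_image_of_injOn (hinj a)]
    have hfree : (Finset.Iio r \ (rev a).image (rnk a)).Nonempty := by
      rw [← Finset.card_pos]
      have hsub : Finset.Iio r \ (rev a).image (rnk a)
          = Finset.Iio r \ ((rev a).image (rnk a) \ {r}) := by
        ext x
        simp only [Finset.mem_sdiff, Finset.mem_Iio, Finset.mem_singleton]
        constructor
        · rintro ⟨h1, h2⟩; exact ⟨h1, fun hh => h2 hh.1⟩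
        · rintro ⟨h1, h2⟩; exact ⟨h1, fun hh => h2 ⟨hh, fun hx => absurd (hx ▸ h1) (lt_irrefl r)⟩⟩
      rw [hsub]
      have h1 := Finset.le_card_sdiff ((rev a).image (rnk a) \ {r}) (Finset.Iio r)
      have hpos : 1 ≤ (rev a).card := Finset.card_pos.2 ⟨M a, hrev⟩
      have hIio : (Finset.Iio r).card = (r : ℕ) := by simp
      omega
    obtain ⟨u, hu⟩ := hfree
    rw [Finset.mem_sdiff, Finset.mem_Iio] at hu
    set f : Fin n → Fin n := fun x => if x = M b then u else rnk a x with hfdef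
    have fval : ∀ z ∈ rev a, f z = rnk a z := by
      intro z hz
      show (if z = M b then u else rnk a z) = rnk a z
      exact if_neg fun h : z = M b => hb1 (h ▸ hz)
    have fMb : f (M b) = u := by
      show (if M b = M b then u else rnk a (M b)) = u
      exact if_pos rfl
    have hfi : Set.InjOn f ((insert (M b) (rev a) : Finset (Fin n)) : Set (Fin n)) := by
      intro x hx y hy hxy
      rw [Finset.mem_coe, Finset.mem_insert] at hx hy
      rcases hx with rfl | hx <;> rcases hy with rfl | hy
      · rfl
      · rw [fMb, fval y hy] at hxy
        exact absurd (by rw [hxy]; exact Finset.mem_image_of_mem _ hy : u ∈ _) hu.2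
      · rw [fMb, fval x hx] at hxy
        exact absurd (by rw [← hxy]; exact Finset.mem_image_of_mem _ hx : u ∈ _) hu.2
      · rw [fval x hx, fval y hy] at hxy
        exact hinj a hx hy hxy
    obtain ⟨e, he⟩ := exists_perm_extend _ f hfi
    refine ⟨e, fun h hh => ?_, ?_⟩
    · rw [he h (Finset.mem_insert_of_mem hh), fval h hh]
    · rw [he (M b) (Finset.mem_insert_self _ _), he (M a) (Finset.mem_insert_of_mem hrev),
        fMb, fval (M a) hrev]
      exact hu.1
  · -- M a unrevealed: two free slots
    have hsub : rev a ⊆ Finset.univ \ {M a, M b} := by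
      intro x hx
      simp only [Finset.mem_sdiff, Finset.mem_univ, true_and, Finset.mem_insert,
        Finset.mem_singleton]
      push_neg
      exact ⟨fun h => hrev (h ▸ hx), fun h => hb1 (h ▸ hx)⟩
    have hcard2 : (rev a).card ≤ n - 2 := by
      have h1 := Finset.card_le_card hsub
      have h2 : ({M a, M b} : Finset (Fin n)).card = 2 := by
        rw [Finset.card_insert_of_notMem (by simpa using (Ne.symm hb2)), Finset.card_singleton]
      rw [Finset.card_sdiff_of_subset (by simp), h2] at h1
      simpa using h1
    have hn2 : 2 ≤ n := by
      by_contra hc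
      push_neg at hc
      interval_cases n
      · exact a.elim0
      · have h1 := (M a).isLt
        have h2 := (M b).isLt
        exact hb2 (Fin.ext (by omega))
    have hfree : 1 < (((rev a).image (rnk a))ᶜ : Finset (Fin n)).card := by
      rw [Finset.card_compl, Finset.card_image_of_injOn (hinj a)]
      simp only [Fintype.card_fin]
      omega
    obtain ⟨u, hu, v, hv, huv⟩ := Finset.one_lt_card.1 hfree
    have hum : u ∉ (rev a).image (rnk a) := Finset.mem_compl.1 hu
    have hvm : v ∉ (rev a).image (rnk a) := Finset.mem_compl.1 hv
    have hu'm : ¬ (min u v ∈ (rev a).image (rnk a)) := by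
      rcases min_choice u v with h | h <;> rw [h] <;> assumption
    have hv'm : ¬ (max u v ∈ (rev a).image (rnk a)) := by
      rcases max_choice u v with h | h <;> rw [h] <;> assumption
    set u' := min u v with hu'
    set v' := max u v with hv'
    have hlt : u' < v' := min_lt_max.2 huv
    set f : Fin n → Fin n := fun x => if x = M b then u' else if x = M a then v' else rnk a x
      with hfdef
    have fval : ∀ z ∈ rev a, f z = rnk a z := by
      intro z hz
      show (if z = M b then u' else if z = M a then v' else rnk a z) = rnk a z
      rw [if_neg (fun h : z = M b => hb1 (h ▸ hz)), if_neg (fun h : z = M a => hrev (h ▸ hz))]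
    have fMb : f (M b) = u' := by
      show (if M b = M b then u' else if M b = M a then v' else rnk a (M b)) = u'
      exact if_pos rfl
    have fMa : f (M a) = v' := by
      show (if M a = M b then u' else if M a = M a then v' else rnk a (M a)) = v'
      rw [if_neg (fun h : M a = M b => hb2 h.symm)]
      exact if_pos rfl
    have hfi : Set.InjOn f
        ((insert (M b) (insert (M a) (rev a)) : Finset (Fin n)) : Set (Fin n)) := by
      intro x hx y hy hxy
      rw [Finset.mem_coe, Finset.mem_insert, Finset.mem_insert] at hx hy
      rcases hx with rfl | rfl | hx <;> rcases hy with rfl | rfl | hy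
      · rfl
      · rw [fMb, fMa] at hxy; exact absurd hxy (ne_of_lt hlt)
      · rw [fMb, fval y hy] at hxy
        exact absurd (by rw [hxy]; exact Finset.mem_image_of_mem _ hy : u' ∈ _) hu'm
      · rw [fMb, fMa] at hxy; exact absurd hxy.symm (ne_of_lt hlt)
      · rfl
      · rw [fMa, fval y hy] at hxy
        exact absurd (by rw [hxy]; exact Finset.mem_image_of_mem _ hy : v' ∈ _) hv'm
      · rw [fMb, fval x hx] at hxy
        exact absurd (by rw [← hxy]; exact Finset.mem_image_of_mem _ hx : u' ∈ _) hu'm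
      · rw [fMa, fval x hx] at hxy
        exact absurd (by rw [← hxy]; exact Finset.mem_image_of_mem _ hx : v' ∈ _) hv'm
      · rw [fval x hx, fval y hy] at hxy
        exact hinj a hx hy hxy
    obtain ⟨e, he⟩ := exists_perm_extend _ f hfi
    refine ⟨e, fun h hh => ?_, ?_⟩
    · rw [he h (Finset.mem_insert_of_mem (Finset.mem_insert_of_mem hh)), fval h hh]
    · rw [he (M b) (Finset.mem_insert_self _ _),
        he (M a) (Finset.mem_insert_of_mem (Finset.mem_insert_self _ _)), fMb, fMa]
      exact hlt


lemma exists_sink {n : ℕ} (rev : Fin n → Finset (Fin n)) (rnk : Fin n → Fin n → Fin n)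
    (hinj : ∀ a, Set.InjOn (rnk a) (rev a)) (M : Equiv.Perm (Fin n))
    (hNPO : ∀ P : Fin n → (Fin n ≃ Fin n), HQCompletion rev rnk P → ParetoOptimal P M)
    (V : Finset (Fin n)) (hV : V.Nonempty) :
    ∃ a ∈ V, ∀ b ∈ V, ¬ HQEdge rev rnk M a b := by
  classical
  by_contra hcon
  push_neg at hcon
  have h1 : ∀ a : Fin n, ∃ b, a ∈ V → (b ∈ V ∧ HQEdge rev rnk M a b) := by
    intro a
    by_cases ha : a ∈ V
    · obtain ⟨b, hb, he⟩ := hcon a ha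
      exact ⟨b, fun _ => ⟨hb, he⟩⟩
    · exact ⟨a, fun h => absurd h ha⟩
  choose f hf using h1
  obtain ⟨a₀, ha₀⟩ := hV
  have hiter : ∀ m : ℕ, f^[m] a₀ ∈ V := by
    intro m
    induction m with
    | zero => exact ha₀
    | succ m ih => rw [Function.iterate_succ_apply']; exact (hf _ ih).1
  -- pigeonhole: the iterate sequence repeats
  have hni : ¬ Function.Injective (fun m : ℕ => f^[m] a₀) := by
    intro hI
    exact Set.infinite_range_of_injective hI (Set.toFinite _)
  rw [Function.not_injective_iff] at hni
  obtain ⟨i₀, j₀, heq₀, hne₀⟩ := hni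
  set i := min i₀ j₀ with hi
  set j := max i₀ j₀ with hj
  have hij : i < j := by
    rcases Nat.lt_or_gt_of_ne hne₀ with h | h
    · rw [hi, hj, min_eq_left h.le, max_eq_right h.le]; exact h
    · rw [hi, hj, min_eq_right h.le, max_eq_left h.le]; exact h
  have heq : f^[i] a₀ = f^[j] a₀ := by
    rcases Nat.lt_or_gt_of_ne hne₀ with h | h
    · rw [hi, hj, min_eq_left h.le, max_eq_right h.le]; exact heq₀
    · rw [hi, hj, min_eq_right h.le, max_eq_left h.le]; exact heq₀.symm
  set p := j - i with hp
  have hppos : 0 < p := by omega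
  have hper : ∀ m : ℕ, i ≤ m → f^[m + p] a₀ = f^[m] a₀ := by
    intro m hm
    obtain ⟨d, rfl⟩ : ∃ d, m = i + d := ⟨m - i, by omega⟩
    calc f^[i + d + p] a₀ = f^[d + (i + p)] a₀ := by rw [show i + d + p = d + (i + p) by omega]
      _ = f^[d] (f^[i + p] a₀) := Function.iterate_add_apply f d (i + p) a₀
      _ = f^[d] (f^[i] a₀) := by rw [show i + p = j by omega, ← heq]
      _ = f^[d + i] a₀ := (Function.iterate_add_apply f d i a₀).symm
      _ = f^[i + d] a₀ := by rw [Nat.add_comm]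
  set Ω : Finset (Fin n) := (Finset.range p).image (fun t => f^[i + t] a₀) with hΩ
  have hmemΩ : ∀ x, x ∈ Ω ↔ ∃ t < p, f^[i + t] a₀ = x := by
    intro x; simp [hΩ, Finset.mem_image, Finset.mem_range]
  have hΩV : ∀ x ∈ Ω, x ∈ V := by
    intro x hx
    obtain ⟨t, _, rfl⟩ := (hmemΩ x).1 hx
    exact hiter _
  have hΩne : Ω.Nonempty := ⟨f^[i] a₀, (hmemΩ _).2 ⟨0, hppos, by rw [Nat.add_zero]⟩⟩
  have hcast : ∀ s t : ℕ, s = t → f^[s] a₀ = f^[t] a₀ := fun s t h => by rw [h]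
  have hmaps : ∀ x ∈ Ω, f x ∈ Ω := by
    intro x hx
    obtain ⟨t, ht, rfl⟩ := (hmemΩ x).1 hx
    have e1 : f (f^[i + t] a₀) = f^[i + t + 1] a₀ :=
      (Function.iterate_succ_apply' f (i + t) a₀).symm
    rcases Nat.lt_or_ge (t + 1) p with h | h
    · rw [e1]
      exact (hmemΩ _).2 ⟨t + 1, h, hcast _ _ (by omega)⟩
    · rw [e1, hcast (i + t + 1) (i + p) (by omega), hper i le_rfl]
      exact (hmemΩ _).2 ⟨0, hppos, hcast _ _ (by omega)⟩
  have hsurjΩ : ∀ x ∈ Ω, ∃ y ∈ Ω, f y = x := by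
    intro x hx
    obtain ⟨t, ht, rfl⟩ := (hmemΩ x).1 hx
    rcases Nat.eq_zero_or_pos t with rfl | htpos
    · refine ⟨f^[i + (p - 1)] a₀, (hmemΩ _).2 ⟨p - 1, by omega, rfl⟩, ?_⟩
      have e1 : f (f^[i + (p - 1)] a₀) = f^[i + (p - 1) + 1] a₀ :=
        (Function.iterate_succ_apply' f (i + (p - 1)) a₀).symm
      rw [e1, hcast (i + (p - 1) + 1) (i + p) (by omega), hper i le_rfl]
      exact hcast _ _ (by omega)
    · refine ⟨f^[i + (t - 1)] a₀, (hmemΩ _).2 ⟨t - 1, by omega, rfl⟩, ?_⟩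
      have e1 : f (f^[i + (t - 1)] a₀) = f^[i + (t - 1) + 1] a₀ :=
        (Function.iterate_succ_apply' f (i + (t - 1)) a₀).symm
      rw [e1]
      exact hcast _ _ (by omega)
  have himg : Ω.image f = Ω := by
    apply Finset.Subset.antisymm
    · intro x hx
      obtain ⟨y, hy, rfl⟩ := Finset.mem_image.1 hx
      exact hmaps y hy
    · intro x hx
      obtain ⟨y, hy, hyx⟩ := hsurjΩ x hx
      exact Finset.mem_image.2 ⟨y, hy, hyx⟩
  have hinjΩ : Set.InjOn f Ω := Finset.injOn_of_card_image_eq (by rw [himg])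
  set g : Fin n → Fin n := fun x => if x ∈ Ω then f x else x with hg
  have hginj : Function.Injective g := by
    intro x y hxy
    by_cases hx : x ∈ Ω <;> by_cases hy : y ∈ Ω <;>
      simp only [hg, if_pos, if_neg, hx, hy, if_true, if_false] at hxy
    · exact hinjΩ hx hy hxy
    · exact absurd (hxy ▸ hmaps x hx) hy
    · exact absurd (show x ∈ Ω by rw [hxy]; exact hmaps y hy) hx
    · exact hxy
  set gp : Equiv.Perm (Fin n) :=
    Equiv.ofBijective g (Finite.injective_iff_bijective.mp hginj) with hgp
  have hgpapp : ∀ x, gp x = g x := fun x => rfl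
  have hPex : ∀ a : Fin n, ∃ e : Fin n ≃ Fin n,
      (∀ h ∈ rev a, e h = rnk a h) ∧ (a ∈ Ω → e (M (f a)) < e (M a)) := by
    intro a
    by_cases ha : a ∈ Ω
    · obtain ⟨e, he1, he2⟩ := (hf a (hΩV a ha)).2
      exact ⟨e, he1, fun _ => he2⟩
    · obtain ⟨e, he⟩ := exists_perm_extend (rev a) (rnk a) (hinj a)
      exact ⟨e, he, fun h => absurd h ha⟩
  choose P hP1 hP2 using hPex
  have hPcomp : HQCompletion rev rnk P := fun a => hP1 a
  set M' : Equiv.Perm (Fin n) := gp.trans M with hM'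
  have hM'app : ∀ a, M' a = M (g a) := fun a => rfl
  apply hNPO P hPcomp
  refine ⟨M', ?_, ?_⟩
  · intro a
    by_cases ha : a ∈ Ω
    · have : g a = f a := if_pos ha
      rw [hM'app, this]
      exact le_of_lt (hP2 a ha)
    · have : g a = a := if_neg ha
      rw [hM'app, this]
  · obtain ⟨a, ha⟩ := hΩne
    refine ⟨a, ?_⟩
    have : g a = f a := if_pos ha
    rw [hM'app, this]
    exact hP2 a ha


lemma topo_list {n : ℕ} (E : Fin n → Fin n → Prop)
    (hsink : ∀ V : Finset (Fin n), V.Nonempty → ∃ a ∈ V, ∀ b ∈ V, ¬ E a b) :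
    ∃ l : List (Fin n), l.Nodup ∧ l.length = n ∧
      ∀ (i : ℕ) (hi : i < l.length) (b : Fin n), E (l.get ⟨i, hi⟩) b → b ∈ l.take i := by
  classical
  have key : ∀ k : ℕ, k ≤ n → ∃ l : List (Fin n), l.Nodup ∧ l.length = k ∧
      ∀ (i : ℕ) (hi : i < l.length) (b : Fin n), E (l.get ⟨i, hi⟩) b → b ∈ l.take i := by
    intro k
    induction k with
    | zero => exact fun _ => ⟨[], List.nodup_nil, rfl, fun i hi => by simp at hi⟩
    | succ k ih =>
      intro hk
      obtain ⟨l, hnd, hlen, hprop⟩ := ih (by omega)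
      set V : Finset (Fin n) := Finset.univ \ l.toFinset with hV
      have hVne : V.Nonempty := by
        rw [← Finset.card_pos, hV, Finset.card_sdiff_of_subset (Finset.subset_univ _)]
        have : l.toFinset.card = k := by rw [List.toFinset_card_of_nodup hnd, hlen]
        simp only [Finset.card_univ, Fintype.card_fin, this]
        omega
      obtain ⟨a, haV, ha⟩ := hsink V hVne
      have hanl : a ∉ l := by
        rw [hV, Finset.mem_sdiff] at haV
        simpa using haV.2
      refine ⟨l ++ [a], ?_, by simp [hlen], ?_⟩
      · rw [List.nodup_append]
        exact ⟨hnd, List.nodup_singleton a, by simpa using fun x hx (hxa : x = a) => hanl (hxa ▸ hx)⟩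
      · intro i hi b hE
        have hi' : i < k + 1 := by
          rw [List.length_append, hlen, List.length_singleton] at hi
          exact hi
        rcases Nat.lt_or_ge i k with h | h
        · have hil : i < l.length := by omega
          have hget : (l ++ [a]).get ⟨i, hi⟩ = l.get ⟨i, hil⟩ := by
            simp [List.getElem_append_left hil]
          rw [hget] at hE
          have := hprop i hil b hE
          rw [List.take_append_of_le_length (by omega)]
          exact this
        · have hik : i = k := by omega
          have hileq : i = l.length := by omega
          have hget : (l ++ [a]).get ⟨i, hi⟩ = a := by
            subst hileq
            simp
          rw [hget] at hE
          have hbV : b ∉ V := fun hb => ha b hb hE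
          have hbl : b ∈ l := by
            rw [hV, Finset.mem_sdiff] at hbV
            push_neg at hbV
            simpa using hbV (Finset.mem_univ b)
          rw [show i = l.length by omega, List.take_left]
          exact hbl
  exact key n le_rfl

/-- If `M` is necessarily Pareto optimal for hybrid-query partial preferences, then
there is a permutation `σ` of the agents such that for every position `i`:
if `M (σ i)` is revealed then agent `σ i` has revealed at least
`min (rank'(σ i, M (σ i))) (n - i₁)` houses (with 1-based rank and position), and
otherwise at least `n - i₁` houses. -/
theorem npo_lower_bound_on_revealed {n : ℕ}
    (rev : Fin n → Finset (Fin n)) (rnk : Fin n → Fin n → Fin n)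
    (hinj : ∀ a, Set.InjOn (rnk a) (rev a))
    (M : Equiv.Perm (Fin n))
    (hNPO : ∀ P : Fin n → (Fin n ≃ Fin n), HQCompletion rev rnk P → ParetoOptimal P M) :
    ∃ σ : Equiv.Perm (Fin n), ∀ i : Fin n,
      (M (σ i) ∈ rev (σ i) →
        min ((rnk (σ i) (M (σ i)) : ℕ) + 1) (n - 1 - (i : ℕ)) ≤ (rev (σ i)).card) ∧
      (M (σ i) ∉ rev (σ i) → n - 1 - (i : ℕ) ≤ (rev (σ i)).card) := by
  classical
  obtain ⟨l, hnd, hlen, hprop⟩ :=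
    topo_list (HQEdge rev rnk M) (exists_sink rev rnk hinj M hNPO)
  set σf : Fin n → Fin n := fun i => l.get ⟨(i : ℕ), by rw [hlen]; exact i.2⟩ with hσf
  have hσinj : Function.Injective σf := by
    intro x y hxy
    have := List.nodup_iff_injective_get.mp hnd hxy
    exact Fin.ext (by simpa using congrArg Fin.val this)
  set σ : Equiv.Perm (Fin n) :=
    Equiv.ofBijective σf (Finite.injective_iff_bijective.mp hσinj) with hσ
  have hσapp : ∀ i, σ i = σf i := fun i => rfl
  refine ⟨σ, fun i => ?_⟩
  set a : Fin n := σ i with ha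
  -- counting argument
  have hmain : (M a ∈ rev a → (rev a).card < (rnk a (M a) : ℕ) + 1) →
      n ≤ (rev a).card + 1 + (i : ℕ) := by
    intro hsmall
    set Bad : Finset (Fin n) := Finset.univ.filter (fun b => M b ∉ rev a ∧ b ≠ a) with hBad
    set Good : Finset (Fin n) := Finset.univ.filter (fun b => M b ∈ rev a ∨ b = a) with hGood
    have hsplit : Good.card + Bad.card = n := by
      rw [hGood, hBad]
      have : (Finset.univ.filter (fun b => M b ∉ rev a ∧ b ≠ a) : Finset (Fin n))
          = Finset.univ.filter (fun b => ¬ (M b ∈ rev a ∨ b = a)) := by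
        apply Finset.filter_congr
        intro b _
        constructor
        · rintro ⟨h1, h2⟩ <;> simp [h1, h2]
        · intro h; push_neg at h; exact h
      rw [this, Finset.card_filter_add_card_filter_not, Finset.card_univ,
        Fintype.card_fin]
    have hGoodcard : Good.card ≤ (rev a).card + 1 := by
      have h1 : Good.card ≤ (insert (M a) (rev a)).card := by
        apply Finset.card_le_card_of_injOn (fun b => M b)
        · intro b hb
          simp only [Finset.mem_coe, hGood, Finset.mem_filter] at hb
          rcases hb.2 with h | rfl
          · exact Finset.mem_insert_of_mem h
          · exact Finset.mem_insert_self _ _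
        · exact fun x _ y _ hxy => M.injective hxy
      exact h1.trans (Finset.card_insert_le _ _)
    have hBadcard : Bad.card ≤ (i : ℕ) := by
      have hsub : Bad ⊆ (l.take (i : ℕ)).toFinset := by
        intro b hb
        rw [hBad, Finset.mem_filter] at hb
        obtain ⟨_, hb1, hb2⟩ := hb
        have hedge : HQEdge rev rnk M a b :=
          edge_of_unrevealed rev rnk hinj M a hsmall b hb1 (fun h => hb2 (M.injective h))
        have : b ∈ l.take (i : ℕ) := hprop (i : ℕ) (by rw [hlen]; exact i.2) b hedge
        simpa using this
      calc Bad.card ≤ (l.take (i : ℕ)).toFinset.card := Finset.card_le_card hsub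
        _ ≤ (l.take (i : ℕ)).length := (l.take (i : ℕ)).toFinset_card_le
        _ ≤ (i : ℕ) := by rw [List.length_take]; omega
    omega
  constructor
  · intro hrev
    rcases Nat.lt_or_ge ((rev a).card) ((rnk a (M a) : ℕ) + 1) with h | h
    · have := hmain (fun _ => h)
      exact le_trans (min_le_right _ _) (by omega)
    · exact le_trans (min_le_left _ _) h
  · intro hrev
    have := hmain (fun h => absurd h hrev)
    omega
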